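/- Let A be a T-brace and suppose a ∈ ζ_n(⋆,A) for some natural number n. Define a₁ = a and a_{i+1} = a_i ⋆ a_i for all i ≥ 1. Then: (i) br(a) is an ideal of A and br(a) = ⟨a₁⟩ + ⟨a₂⟩ + ⋯ + ⟨a_n⟩; (ii) if the additive group of ζ(⋆,A) is torsion-free, then br(a) = ⟨a₁⟩ ⊕ ⟨a₂⟩ ⊕ ⋯ ⊕ ⟨a_n⟩ (an internal direct sum of additive subgroups). -/

import Mathlib

/-!
Basic theory of left braces (skew left braces of abelian type), following
Dixon–Kurdachenko–Subbotin, "On the structure of braces whose subideals are ideals".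
-/

universe u v

/-- A left brace: an abelian group `(A,+)`, a group `(A,·)`, satisfying
`a(b+c) = ab + ac - a`.  (The additive and multiplicative identities then coincide.) -/
class LeftBrace (A : Type u) extends AddCommGroup A, Group A where
  mul_add_eq : ∀ a b c : A, a * (b + c) = a * b + a * c - a

namespace LeftBrace

variable {A : Type u} [LeftBrace A]

/-- The star operation `a ⋆ b = ab - a - b`. -/
def bstar (a b : A) : A := a * b - a - b

/-- A subset of a left brace is a subbrace if it is closed under the additive-group
and multiplicative-group operations (equivalently, it is a left brace under the
restricted operations). -/
structure IsSubbrace (S : Set A) : Prop where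
  zero_mem : (0 : A) ∈ S
  add_mem : ∀ {a b : A}, a ∈ S → b ∈ S → a + b ∈ S
  neg_mem : ∀ {a : A}, a ∈ S → -a ∈ S
  mul_mem : ∀ {a b : A}, a ∈ S → b ∈ S → a * b ∈ S
  inv_mem : ∀ {a : A}, a ∈ S → a⁻¹ ∈ S

/-- `I` is an ideal of the subbrace `J`: `I ⊆ J`, both are subbraces, and
`a ⋆ z, z ⋆ a ∈ I` for all `a ∈ J`, `z ∈ I`. -/
structure IsIdealIn (I J : Set A) : Prop where
  subset : I ⊆ J
  subbrace : IsSubbrace I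
  ambient_subbrace : IsSubbrace J
  star_mem_left : ∀ a ∈ J, ∀ z ∈ I, bstar a z ∈ I
  star_mem_right : ∀ a ∈ J, ∀ z ∈ I, bstar z a ∈ I

/-- `I` is an ideal of the brace `A`. -/
def IsIdeal (I : Set A) : Prop := IsIdealIn I (Set.univ : Set A)

/-- `A` is a T-brace if being an ideal is a transitive relation: an ideal of an
ideal of `A` is an ideal of `A`. -/
def IsTBrace (A : Type u) [LeftBrace A] : Prop :=
  ∀ I J : Set A, IsIdealIn I J → IsIdeal J → IsIdeal I

/-- The `⋆`-center `ζ(⋆,A) = {a | a ⋆ x = x ⋆ a = 0 for all x}`. -/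
def starCenter (A : Type u) [LeftBrace A] : Set A :=
  {a : A | ∀ x : A, bstar a x = 0 ∧ bstar x a = 0}

/-- The preimage in `A` of the `⋆`-center of the quotient of `A` by (the ideal) `S`:
`a` belongs to it iff `a ⋆ x ∈ S` and `x ⋆ a ∈ S` for every `x ∈ A`. -/
def nextCenter (A : Type u) [LeftBrace A] (S : Set A) : Set A :=
  {a : A | ∀ x : A, bstar a x ∈ S ∧ bstar x a ∈ S}

/-- The upper `⋆`-central series, indexed by naturals:
`ζ₀(⋆,A) = 0` and `ζ_{n+1}(⋆,A)/ζ_n(⋆,A) = ζ(⋆, A/ζ_n(⋆,A))`. -/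
def zetaNat (A : Type u) [LeftBrace A] : ℕ → Set A
  | 0 => ({0} : Set A)
  | n + 1 => nextCenter A (zetaNat A n)

/-- The upper `⋆`-central series, indexed by ordinals (unions at limit ordinals). -/
noncomputable def zetaOrd (A : Type u) [LeftBrace A] (o : Ordinal.{v}) : Set A :=
  Ordinal.limitRecOn o (({0} : Set A))
    (fun _ ih => nextCenter A ih)
    (fun o _ ih => ⋃ (o' : Ordinal) (h : o' < o), ih o' h)

/-- The upper `⋆`-hypercenter `ζ_∞(⋆,A)`: the final (stable) term of the upper
`⋆`-central series, i.e. the union of all its terms. -/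
noncomputable def starHypercenter (A : Type u) [LeftBrace A] : Set A :=
  ⋃ o : Ordinal.{u}, zetaOrd A o

/-- `A` is `⋆`-hypercentral if `A = ζ_γ(⋆,A)` for some ordinal `γ`. -/
def IsStarHypercentral (A : Type u) [LeftBrace A] : Prop :=
  ∃ γ : Ordinal.{u}, zetaOrd A γ = (Set.univ : Set A)

/-- `K ⋆ L`: the additive subgroup of `(A,+)` generated by all `x ⋆ y`, `x ∈ K`, `y ∈ L`. -/
def setStar (K L : Set A) : AddSubgroup A :=
  AddSubgroup.closure {z : A | ∃ x ∈ K, ∃ y ∈ L, z = bstar x y}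

/-- `rightStarSeries A n = A^{(n+1)}`, where `A^{(1)} = A` and `A^{(n+1)} = A^{(n)} ⋆ A`. -/
def rightStarSeries (A : Type u) [LeftBrace A] : ℕ → Set A
  | 0 => (Set.univ : Set A)
  | n + 1 => ((setStar (rightStarSeries A n) (Set.univ : Set A) : AddSubgroup A) : Set A)

/-- `leftStarSeries A n = A^{n+1}`, where `A^1 = A` and `A^{n+1} = A ⋆ A^n`. -/
def leftStarSeries (A : Type u) [LeftBrace A] : ℕ → Set A
  | 0 => (Set.univ : Set A)
  | n + 1 => ((setStar (Set.univ : Set A) (leftStarSeries A n) : AddSubgroup A) : Set A)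

/-- `A` is Smoktunowicz-nilpotent if `A^{(n)} = A^k = 0` for some naturals `n, k`. -/
def IsSmoktunowiczNilpotent (A : Type u) [LeftBrace A] : Prop :=
  ∃ n k : ℕ, rightStarSeries A n = ({0} : Set A) ∧ leftStarSeries A k = ({0} : Set A)

/-- The subbrace generated by a subset `M`: the intersection of all subbraces containing `M`. -/
def braceClosure (M : Set A) : Set A := ⋂₀ {S : Set A | IsSubbrace S ∧ M ⊆ S}

end LeftBrace

open LeftBrace in
/-- The sequence `a₁ = a`, `a_{i+1} = a_i ⋆ a_i` (0-indexed: `aSeq a i = a_{i+1}`). -/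
def LeftBrace.aSeq {A : Type u} [LeftBrace A] (a : A) : ℕ → A
  | 0 => a
  | i + 1 => bstar (LeftBrace.aSeq a i) (LeftBrace.aSeq a i)


namespace LeftBrace

variable {A : Type u} [LeftBrace A]

/-- Bridge: derive an equation from another one differing by abelian-group reasoning. -/
lemma eq_of_eq_of_sub_eq_sub {B : Type*} [AddGroup B] {a b c d : B}
    (h : a = b) (habel : c - d = a - b) : c = d :=
  sub_eq_zero.mp (habel.trans (sub_eq_zero_of_eq h))

lemma bmul_zero (a : A) : a * (0:A) = a := by
  have h := mul_add_eq a 0 0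
  rw [add_zero] at h
  exact eq_of_eq_of_sub_eq_sub h.symm (by abel)

lemma zero_eq_one : (0:A) = 1 := by
  have h1 : (1:A) * 0 = 1 := bmul_zero 1
  rw [one_mul] at h1; exact h1

lemma bzero_mul (a : A) : (0:A) * a = a := by rw [zero_eq_one, one_mul]

/-- The lambda map `λ_x(y) = xy - x` as an additive group hom. -/
def lam (a : A) : A →+ A where
  toFun y := a * y - a
  map_zero' := by show a * 0 - a = 0; rw [bmul_zero, sub_self]
  map_add' y z := by
    show a * (y + z) - a = (a * y - a) + (a * z - a)
    rw [mul_add_eq]; abel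

lemma lam_apply (x y : A) : lam x y = x * y - x := rfl

lemma lam_eq_bstar_add (x y : A) : lam x y = bstar x y + y := by
  rw [lam_apply, bstar]; abel

lemma lam_mul (x y z : A) : lam (x * y) z = lam x (lam y z) := by
  have h : lam x (lam y z) = lam x (y * z) - lam x y := by
    rw [show lam y z = y * z - y from rfl, map_sub]
  rw [h, lam_apply, lam_apply, lam_apply, mul_assoc]; abel

lemma lam_one (y : A) : lam (1:A) y = y := by
  rw [lam_apply, one_mul, ← zero_eq_one, sub_zero]

lemma lam_inv_cancel (x y : A) : lam x⁻¹ (lam x y) = y := by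
  rw [← lam_mul, inv_mul_cancel, lam_one]

lemma lam_cancel_inv (x y : A) : lam x (lam x⁻¹ y) = y := by
  rw [← lam_mul, mul_inv_cancel, lam_one]

lemma mul_eq_lam_add (x y : A) : x * y = lam x y + x := by
  rw [lam_apply]; abel

lemma add_eq_mul_lam (x y : A) : x + y = x * lam x⁻¹ y := by
  rw [mul_eq_lam_add, lam_cancel_inv, add_comm]

lemma inv_eq_neg_lam (x : A) : x⁻¹ = -(lam x⁻¹ x) := by
  have h := mul_eq_lam_add x⁻¹ x
  rw [inv_mul_cancel, ← zero_eq_one] at h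
  exact eq_neg_of_add_eq_zero_right h.symm

lemma neg_eq_lam_inv (x : A) : -x = lam x x⁻¹ := by
  have h := mul_eq_lam_add x x⁻¹
  rw [mul_inv_cancel, ← zero_eq_one] at h
  exact neg_eq_of_add_eq_zero_left h.symm

lemma neg_decomp (x : A) : -x = x⁻¹ + bstar x⁻¹ x := by
  have h := inv_eq_neg_lam x
  rw [lam_eq_bstar_add] at h
  exact eq_of_eq_of_sub_eq_sub h.symm (by abel)

lemma bstar_eq_lam_sub (x y : A) : bstar x y = lam x y - y := by
  rw [lam_eq_bstar_add]; abel

lemma bstar_add_right (x y z : A) : bstar x (y + z) = bstar x y + bstar x z := by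
  rw [bstar_eq_lam_sub, bstar_eq_lam_sub, bstar_eq_lam_sub, map_add]; abel

lemma bstar_zsmul_right (x y : A) (k : ℤ) : bstar x (k • y) = k • bstar x y := by
  rw [bstar_eq_lam_sub, bstar_eq_lam_sub, map_zsmul, smul_sub]

lemma bstar_neg_right (x y : A) : bstar x (-y) = -bstar x y := by
  rw [bstar_eq_lam_sub, bstar_eq_lam_sub, map_neg]; abel

lemma bstar_zero_right (x : A) : bstar x (0:A) = 0 := by
  rw [bstar_eq_lam_sub, map_zero, sub_zero]

lemma bstar_zero_left (x : A) : bstar (0:A) x = 0 := by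
  rw [bstar, bzero_mul]; abel

lemma mul_bstar (x y z : A) : bstar (x * y) z = bstar x (bstar y z) + bstar y z + bstar x z := by
  rw [bstar_eq_lam_sub (x*y), lam_mul]
  rw [bstar_eq_lam_sub x (bstar y z), bstar_eq_lam_sub y z, bstar_eq_lam_sub x z, map_sub]
  abel

lemma add_bstar_decomp (x y z : A) :
    bstar (x + y) z = bstar x (bstar (lam x⁻¹ y) z) + bstar (lam x⁻¹ y) z + bstar x z := by
  rw [add_eq_mul_lam x y, mul_bstar]

lemma bstar_inv_right (x y : A) : bstar x y⁻¹ = -bstar x y - bstar x (bstar y y⁻¹) := by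
  have h0 : y * y⁻¹ = bstar y y⁻¹ + y⁻¹ + y := by
    rw [mul_eq_lam_add, lam_eq_bstar_add]
  have h1 : bstar x (bstar y y⁻¹ + y⁻¹ + y) = bstar x 0 := by
    rw [← h0, mul_inv_cancel, ← zero_eq_one]
  rw [bstar_add_right, bstar_add_right, bstar_zero_right] at h1
  exact eq_of_eq_of_sub_eq_sub h1 (by abel)

lemma inv_bstar (x y : A) : bstar x⁻¹ y = -(lam x⁻¹ (bstar x y)) := by
  have h := mul_bstar x⁻¹ x y
  rw [inv_mul_cancel, ← zero_eq_one, bstar_zero_left] at h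
  -- 0 = bstar x⁻¹ (bstar x y) + bstar x y + bstar x⁻¹ y
  have h2 : lam x⁻¹ (bstar x y) + bstar x⁻¹ y = 0 := by
    rw [lam_eq_bstar_add]
    rw [← h]
  exact eq_neg_of_add_eq_zero_right h2


structure Good (I : Set A) : Prop where
  zero_mem : (0:A) ∈ I
  add_mem : ∀ ⦃x y : A⦄, x ∈ I → y ∈ I → x + y ∈ I
  neg_mem : ∀ ⦃x : A⦄, x ∈ I → -x ∈ I
  bleft : ∀ (x : A) ⦃z : A⦄, z ∈ I → bstar x z ∈ I
  bright : ∀ (x : A) ⦃z : A⦄, z ∈ I → bstar z x ∈ I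

namespace Good

variable {I : Set A} (hI : Good I)

include hI

lemma sub_mem {x y : A} (hx : x ∈ I) (hy : y ∈ I) : x - y ∈ I := by
  rw [sub_eq_add_neg]; exact hI.add_mem hx (hI.neg_mem hy)

lemma lam_mem (x : A) {z : A} (hz : z ∈ I) : lam x z ∈ I := by
  rw [lam_eq_bstar_add]; exact hI.add_mem (hI.bleft x hz) hz

lemma zsmul_mem {z : A} (hz : z ∈ I) (k : ℤ) : k • z ∈ I := by
  induction k using Int.induction_on with
  | zero => simpa using hI.zero_mem
  | succ i ih => rw [add_zsmul, one_zsmul]; exact hI.add_mem ih hz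
  | pred i ih =>
      have h : (-(i:ℤ) - 1) • z = -(i:ℤ) • z + -z := by module
      rw [h]; exact hI.add_mem ih (hI.neg_mem hz)

lemma mul_mem {x y : A} (hx : x ∈ I) (hy : y ∈ I) : x * y ∈ I := by
  rw [mul_eq_lam_add]; exact hI.add_mem (hI.lam_mem x hy) hx

lemma inv_mem {x : A} (hx : x ∈ I) : x⁻¹ ∈ I := by
  rw [inv_eq_neg_lam]; exact hI.neg_mem (hI.lam_mem _ hx)

lemma isSubbrace : IsSubbrace I where
  zero_mem := hI.zero_mem
  add_mem := fun ha hb => hI.add_mem ha hb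
  neg_mem := fun ha => hI.neg_mem ha
  mul_mem := fun ha hb => hI.mul_mem ha hb
  inv_mem := fun ha => hI.inv_mem ha

lemma isIdeal : IsIdeal I where
  subset := Set.subset_univ I
  subbrace := hI.isSubbrace
  ambient_subbrace :=
    { zero_mem := trivial, add_mem := fun _ _ => trivial, neg_mem := fun _ => trivial,
      mul_mem := fun _ _ => trivial, inv_mem := fun _ => trivial }
  star_mem_left := fun a _ z hz => hI.bleft a hz
  star_mem_right := fun a _ z hz => hI.bright a hz

end Good

lemma Good.of_isIdeal {I : Set A} (h : IsIdeal I) : Good I where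
  zero_mem := h.subbrace.zero_mem
  add_mem := fun _ _ hx hy => h.subbrace.add_mem hx hy
  neg_mem := fun _ hx => h.subbrace.neg_mem hx
  bleft := fun x _ hz => h.star_mem_left x trivial _ hz
  bright := fun x _ hz => h.star_mem_right x trivial _ hz

lemma good_singleton_zero : Good ({0} : Set A) where
  zero_mem := rfl
  add_mem := by rintro x y rfl rfl; simp
  neg_mem := by rintro x rfl; simp
  bleft := by rintro x z rfl; simp [bstar_zero_right]
  bright := by rintro x z rfl; simp [bstar_zero_left]


lemma mem_nextCenter {S : Set A} {z : A} :
    z ∈ nextCenter A S ↔ ∀ x : A, bstar z x ∈ S ∧ bstar x z ∈ S := Iff.rfl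

lemma nextCenter_mono {S T : Set A} (h : S ⊆ T) : nextCenter A S ⊆ nextCenter A T := by
  intro z hz x; exact ⟨h (hz x).1, h (hz x).2⟩

lemma Good.subset_nextCenter {I : Set A} (hI : Good I) : I ⊆ nextCenter A I := by
  intro z hz x; exact ⟨hI.bright x hz, hI.bleft x hz⟩

/-- Key perturbation fact: adding an element of a good set `I` does not affect
left-star membership in `I`. -/
lemma Good.bstar_add_left_mem {I : Set A} (hI : Good I) {w : A}
    (hw : ∀ x : A, bstar w x ∈ I) {d : A} (hd : d ∈ I) (x : A) : bstar (w + d) x ∈ I := by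
  rw [add_bstar_decomp]
  have hd' : lam w⁻¹ d ∈ I := hI.lam_mem _ hd
  exact hI.add_mem (hI.add_mem (hI.bleft w (hI.bright x hd')) (hI.bright x hd')) (hw x)

lemma Good.nextCenter_good {I : Set A} (hI : Good I) : Good (nextCenter A I) := by
  set N := nextCenter A I with hN
  have hNzero : (0:A) ∈ N := by
    intro x; rw [bstar_zero_left, bstar_zero_right]; exact ⟨hI.zero_mem, hI.zero_mem⟩
  have hNadd : ∀ ⦃z w : A⦄, z ∈ N → w ∈ N → z + w ∈ N := by
    intro z w hz hw x
    constructor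
    · -- bstar (z + w) x ∈ I
      rw [add_bstar_decomp]
      have hd : bstar z⁻¹ w ∈ I := (hw z⁻¹).2
      have hw' : lam z⁻¹ w = w + bstar z⁻¹ w := by rw [lam_eq_bstar_add]; abel
      have h1 : bstar (lam z⁻¹ w) x ∈ I := by
        rw [hw']; exact hI.bstar_add_left_mem (fun y => (hw y).1) hd x
      exact hI.add_mem (hI.add_mem (hI.bleft z h1) h1) ((hz x).1)
    · rw [bstar_add_right]; exact hI.add_mem ((hz x).2) ((hw x).2)
  have hNinv : ∀ ⦃z : A⦄, z ∈ N → z⁻¹ ∈ N := by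
    intro z hz x
    constructor
    · rw [inv_bstar]; exact hI.neg_mem (hI.lam_mem _ ((hz x).1))
    · have h := bstar_inv_right x z
      rw [h]
      exact hI.sub_mem (hI.neg_mem ((hz x).2)) (hI.bleft x (hz z⁻¹).1)
  have hIN : I ⊆ N := hI.subset_nextCenter
  exact
    { zero_mem := hNzero
      add_mem := hNadd
      neg_mem := by
        intro z hz
        have h : -z = z⁻¹ + bstar z⁻¹ z := neg_decomp z
        rw [h]; exact hNadd (hNinv hz) (hIN ((hz z⁻¹).2))
      bleft := fun x z hz => hIN ((hz x).2)
      bright := fun x z hz => hIN ((hz x).1) }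

lemma good_zetaNat : ∀ n : ℕ, Good (zetaNat A n)
  | 0 => good_singleton_zero
  | n + 1 => (good_zetaNat n).nextCenter_good

lemma zetaNat_subset_succ (n : ℕ) : zetaNat A n ⊆ zetaNat A (n + 1) :=
  (good_zetaNat n).subset_nextCenter

lemma zetaNat_mono {m n : ℕ} (h : m ≤ n) : zetaNat A m ⊆ zetaNat A n := by
  induction n with
  | zero => rw [Nat.le_zero] at h; subst h; exact subset_rfl
  | succ n ih =>
    rcases Nat.lt_or_ge m (n+1) with h' | h'
    · exact (ih (Nat.lt_succ_iff.mp h')).trans (zetaNat_subset_succ n)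
    · have : m = n + 1 := le_antisymm h h'
      subst this; exact subset_rfl

lemma aSeq_shift (a : A) (i : ℕ) : aSeq (bstar a a) i = aSeq a (i + 1) := by
  induction i with
  | zero => rfl
  | succ i ih => show bstar (aSeq (bstar a a) i) (aSeq (bstar a a) i) = _; rw [ih]; rfl

lemma aSeq_mem_zeta {a : A} {n : ℕ} (ha : a ∈ zetaNat A n) (i : ℕ) :
    aSeq a i ∈ zetaNat A (n - i) := by
  induction i with
  | zero => exact zetaNat_mono (Nat.sub_le n 0) ha
  | succ i ih =>
    rcases Nat.eq_zero_or_eq_succ_pred (n - i) with h | h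
    · have h0 : aSeq a i = 0 := by rw [h] at ih; exact ih
      have : aSeq a (i+1) = 0 := by
        show bstar (aSeq a i) (aSeq a i) = 0
        rw [h0, bstar_zero_left]
      rw [this]
      exact (good_zetaNat _).zero_mem
    · rw [h] at ih
      have h2 : bstar (aSeq a i) (aSeq a i) ∈ zetaNat A (n - i - 1) := (ih (aSeq a i)).1
      have h3 : n - (i+1) = n - i - 1 := by omega
      rw [h3]
      exact h2

lemma aSeq_self_eq_zero {a : A} {n : ℕ} (ha : a ∈ zetaNat A n) : aSeq a n = 0 := by
  have := aSeq_mem_zeta ha n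
  rw [Nat.sub_self] at this
  exact this

/-! ### Relative zeta series over a good base set -/

def relZ (B : Set A) : ℕ → Set A
  | 0 => B
  | n + 1 => nextCenter A (relZ B n)

lemma good_relZ {B : Set A} (hB : Good B) : ∀ n : ℕ, Good (relZ B n)
  | 0 => hB
  | n + 1 => (good_relZ hB n).nextCenter_good

lemma relZ_subset_succ {B : Set A} (hB : Good B) (n : ℕ) : relZ B n ⊆ relZ B (n + 1) :=
  (good_relZ hB n).subset_nextCenter

lemma subset_relZ {B : Set A} (hB : Good B) (n : ℕ) : B ⊆ relZ B n := by
  induction n with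
  | zero => exact subset_rfl
  | succ n ih => exact ih.trans (relZ_subset_succ hB n)

lemma zetaNat_subset_relZ {B : Set A} (h0 : (0:A) ∈ B) : ∀ n, zetaNat A n ⊆ relZ B n
  | 0 => by intro x hx; rw [hx]; exact h0
  | n + 1 => nextCenter_mono (zetaNat_subset_relZ h0 n)


lemma isSubbrace_univ : IsSubbrace (Set.univ : Set A) :=
  { zero_mem := trivial, add_mem := fun _ _ => trivial, neg_mem := fun _ => trivial,
    mul_mem := fun _ _ => trivial, inv_mem := fun _ => trivial }

/-! ### The key lemma -/

theorem key_lemma (hT : IsTBrace A) {B : Set A} (hBI : IsIdeal B) {m : ℕ} {a : A}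
    (ha : a ∈ relZ B m) (haa : bstar a a ∈ B) :
    IsIdeal {x : A | ∃ k : ℤ, x - k • a ∈ B} := by
  have hB : Good B := Good.of_isIdeal hBI
  cases m with
  | zero =>
    have hset : {x : A | ∃ k : ℤ, x - k • a ∈ B} = B := by
      ext x
      constructor
      · rintro ⟨k, hk⟩
        have hx : x = (x - k • a) + k • a := by abel
        rw [hx]; exact hB.add_mem hk (hB.zsmul_mem ha k)
      · intro hx; exact ⟨0, by simpa using hx⟩
    rw [hset]; exact hBI
  | succ m' =>
    set Z : ℕ → Set A := relZ B with hZdef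
    have hG : ∀ l, Good (Z l) := good_relZ hB
    have hBZ : ∀ l, B ⊆ Z l := subset_relZ hB
    have hZsucc : ∀ l, Z l ⊆ Z (l+1) := relZ_subset_succ hB
    have hmem : ∀ (l : ℕ) {z : A}, z ∈ Z (l+1) → ∀ x : A, bstar z x ∈ Z l ∧ bstar x z ∈ Z l :=
      fun l z hz x => hz x
    have haZ : ∀ x : A, bstar a x ∈ Z m' ∧ bstar x a ∈ Z m' := fun x => ha x
    have hainv : bstar a⁻¹ a ∈ B := by
      rw [inv_bstar]; exact hB.neg_mem (hB.lam_mem _ haa)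
    -- helper1: perturbation by an element of B
    have helper1 : ∀ {v : A}, (∀ x, bstar v x ∈ Z m') → bstar v a ∈ B →
        ∀ {d : A}, d ∈ B → (∀ x, bstar (v + d) x ∈ Z m') ∧ bstar (v + d) a ∈ B := by
      intro v hv1 hv2 d hd
      have hd' : lam v⁻¹ d ∈ B := hB.lam_mem _ hd
      constructor
      · intro x
        rw [add_bstar_decomp]
        exact (hG m').add_mem ((hG m').add_mem
          (hBZ m' (hB.bleft v (hB.bright x hd')))
          (hBZ m' (hB.bright x hd'))) (hv1 x)
      · rw [add_bstar_decomp]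
        exact hB.add_mem (hB.add_mem (hB.bleft v (hB.bright a hd')) (hB.bright a hd')) hv2
    -- hstep: adding two elements with the Q-property
    have hstep : ∀ {u v : A}, (∀ x, bstar u x ∈ Z m') → bstar u a ∈ B →
        (∀ x, bstar v x ∈ Z m') → bstar v a ∈ B → bstar u⁻¹ v ∈ B →
        (∀ x, bstar (u + v) x ∈ Z m') ∧ bstar (u + v) a ∈ B := by
      intro u v hu1 hu2 hv1 hv2 hdelta
      have hw : lam u⁻¹ v = v + bstar u⁻¹ v := by rw [lam_eq_bstar_add]; abel
      obtain ⟨hw1, hw2⟩ := helper1 hv1 hv2 hdelta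
      rw [← hw] at hw1 hw2
      constructor
      · intro x
        rw [add_bstar_decomp]
        exact (hG m').add_mem ((hG m').add_mem ((hG m').bleft u (hw1 x)) (hw1 x)) (hu1 x)
      · rw [add_bstar_decomp]
        exact hB.add_mem (hB.add_mem (hB.bleft u hw2) hw2) hu2
    have hQa : (∀ x, bstar a x ∈ Z m') ∧ bstar a a ∈ B := ⟨fun x => (haZ x).1, haa⟩
    have hQnega : (∀ x, bstar (-a) x ∈ Z m') ∧ bstar (-a) a ∈ B := by
      have hainvZ : a⁻¹ ∈ Z (m'+1) := (hG (m'+1)).inv_mem ha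
      have h1 : ∀ x, bstar a⁻¹ x ∈ Z m' := fun x => (hainvZ x).1
      have h2 := helper1 h1 hainv hainv
      rw [← neg_decomp] at h2
      exact h2
    -- Q for all integer multiples of a
    have hQ : ∀ k : ℤ, (∀ x, bstar (k • a) x ∈ Z m') ∧ bstar (k • a) a ∈ B := by
      intro k
      induction k using Int.induction_on with
      | zero =>
        constructor
        · intro x; rw [zero_zsmul, bstar_zero_left]; exact (hG m').zero_mem
        · rw [zero_zsmul, bstar_zero_left]; exact hB.zero_mem
      | succ i ih =>
        have hdelta : bstar ((i:ℤ) • a)⁻¹ a ∈ B := by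
          rw [inv_bstar]; exact hB.neg_mem (hB.lam_mem _ ih.2)
        have h := hstep ih.1 ih.2 hQa.1 hQa.2 hdelta
        have he : ((i:ℤ) + 1) • a = (i:ℤ) • a + a := by module
        rw [he]; exact h
      | pred i ih =>
        have hdelta : bstar ((-(i:ℤ)) • a)⁻¹ (-a) ∈ B := by
          rw [bstar_neg_right, inv_bstar]
          exact hB.neg_mem (hB.neg_mem (hB.lam_mem _ ih.2))
        have h := hstep ih.1 ih.2 hQnega.1 hQnega.2 hdelta
        have he : (-(i:ℤ) - 1) • a = (-(i:ℤ)) • a + -a := by module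
        rw [he]; exact h
    -- right star with a
    have hCa : ∀ (i : ℕ) (k : ℤ) {s : A}, s ∈ Z (i+1) → bstar (k • a + s) a ∈ Z i := by
      intro i k s hs
      have hdel : bstar (k • a)⁻¹ s ∈ Z i := (hmem i hs _).2
      have hw : lam (k • a)⁻¹ s = s + bstar (k • a)⁻¹ s := by rw [lam_eq_bstar_add]; abel
      have hwZ : lam (k • a)⁻¹ s ∈ Z (i+1) := by
        rw [hw]; exact (hG (i+1)).add_mem hs (hZsucc i hdel)
      rw [add_bstar_decomp]
      exact (hG i).add_mem ((hG i).add_mem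
        ((hG i).bleft _ ((hmem i hwZ a).1))
        ((hmem i hwZ a).1)) (hBZ i (hQ k).2)
    have hCa' : ∀ (i : ℕ) (k : ℤ) {s : A}, s ∈ Z i → bstar (k • a + s) a ∈ Z i :=
      fun i k s hs => hCa i k (hZsucc i hs)
    -- the chain
    set C : ℕ → Set A := fun i => {x : A | ∃ k : ℤ, x - k • a ∈ Z i} with hCdef
    have hCstar : ∀ (i : ℕ) {u : A}, u ∈ C i → bstar u a ∈ Z i := by
      rintro i u ⟨k, hk⟩
      have hu : u = k • a + (u - k • a) := by abel
      rw [hu]; exact hCa' i k hk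
    have hCstar' : ∀ (i : ℕ) {u : A}, u ∈ C (i+1) → bstar u a ∈ Z i := by
      rintro i u ⟨k, hk⟩
      have hu : u = k • a + (u - k • a) := by abel
      rw [hu]; exact hCa i k hk
    have hsub : ∀ i, IsSubbrace (C i) := by
      intro i
      refine ⟨⟨0, by simpa using (hG i).zero_mem⟩, ?_, ?_, ?_, ?_⟩
      · rintro u v ⟨k, hk⟩ ⟨l, hl⟩
        refine ⟨k + l, ?_⟩
        have he : u + v - (k + l) • a = (u - k • a) + (v - l • a) := by module
        rw [he]; exact (hG i).add_mem hk hl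
      · rintro u ⟨k, hk⟩
        refine ⟨-k, ?_⟩
        have he : -u - (-k) • a = -(u - k • a) := by module
        rw [he]; exact (hG i).neg_mem hk
      · rintro u v ⟨k, hk⟩ ⟨l, hl⟩
        refine ⟨k + l, ?_⟩
        have hua : bstar u a ∈ Z i := hCstar i ⟨k, hk⟩
        have hut : bstar u (v - l • a) ∈ Z i := (hG i).bleft u hl
        have e4 : u * v = l • (bstar u a + a) + (bstar u (v - l • a) + (v - l • a)) + u := by
          nth_rewrite 1 [mul_eq_lam_add]
          nth_rewrite 1 [show v = l • a + (v - l • a) from by abel]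
          rw [map_add, map_zsmul, lam_eq_bstar_add u a, lam_eq_bstar_add u (v - l • a)]
        have he : u * v - (k + l) • a =
            l • bstar u a + (bstar u (v - l • a) + ((v - l • a) + (u - k • a))) := by
          rw [e4]; module
        rw [he]
        exact (hG i).add_mem ((hG i).zsmul_mem hua l)
          ((hG i).add_mem hut ((hG i).add_mem hl hk))
      · rintro u ⟨k, hk⟩
        refine ⟨-k, ?_⟩
        have hua : bstar u a ∈ Z i := hCstar i ⟨k, hk⟩
        have huinva : bstar u⁻¹ a ∈ Z i := by
          rw [inv_bstar]; exact (hG i).neg_mem ((hG i).lam_mem _ hua)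
        have huu : bstar u⁻¹ u ∈ Z i := by
          have hz2 : bstar u⁻¹ u = k • bstar u⁻¹ a + bstar u⁻¹ (u - k • a) := by
            nth_rewrite 2 [show u = k • a + (u - k • a) from by abel]
            rw [bstar_add_right, bstar_zsmul_right]
          rw [hz2]
          exact (hG i).add_mem ((hG i).zsmul_mem huinva k) ((hG i).bleft u⁻¹ hk)
        have e1 : u⁻¹ = -(bstar u⁻¹ u + u) := by
          nth_rewrite 1 [inv_eq_neg_lam]
          rw [lam_eq_bstar_add]
        have he : u⁻¹ - (-k) • a = -(bstar u⁻¹ u) - (u - k • a) :=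
          eq_of_eq_of_sub_eq_sub e1 (by module)
        rw [he]
        exact (hG i).sub_mem ((hG i).neg_mem huu) hk
    have hidealIn : ∀ i, IsIdealIn (C i) (C (i+1)) := by
      intro i
      refine ⟨?_, hsub i, hsub (i+1), ?_, ?_⟩
      · rintro x ⟨k, hk⟩; exact ⟨k, hZsucc i hk⟩
      · rintro x hx z ⟨l, hl⟩
        refine ⟨0, ?_⟩
        rw [zero_zsmul, sub_zero]
        have h1 : bstar x a ∈ Z i := hCstar' i hx
        have hz2 : bstar x z = l • bstar x a + bstar x (z - l • a) := by
          nth_rewrite 1 [show z = l • a + (z - l • a) from by abel]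
          rw [bstar_add_right, bstar_zsmul_right]
        rw [hz2]
        exact (hG i).add_mem ((hG i).zsmul_mem h1 l) ((hG i).bleft x hl)
      · rintro x ⟨k, hk⟩ z hz
        refine ⟨0, ?_⟩
        rw [zero_zsmul, sub_zero]
        have h1 : bstar z a ∈ Z i := hCstar i hz
        have h2 : bstar z (x - k • a) ∈ Z i := (hmem i hk z).2
        have hz2 : bstar z x = k • bstar z a + bstar z (x - k • a) := by
          nth_rewrite 1 [show x = k • a + (x - k • a) from by abel]
          rw [bstar_add_right, bstar_zsmul_right]
        rw [hz2]
        exact (hG i).add_mem ((hG i).zsmul_mem h1 k) h2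
    have htop : IsIdeal (C m') := by
      refine ⟨Set.subset_univ _, hsub m', isSubbrace_univ, ?_, ?_⟩
      · rintro x - z ⟨l, hl⟩
        refine ⟨0, ?_⟩
        rw [zero_zsmul, sub_zero]
        have h1 : bstar x a ∈ Z m' := (haZ x).2
        have hz2 : bstar x z = l • bstar x a + bstar x (z - l • a) := by
          nth_rewrite 1 [show z = l • a + (z - l • a) from by abel]
          rw [bstar_add_right, bstar_zsmul_right]
        rw [hz2]
        exact (hG m').add_mem ((hG m').zsmul_mem h1 l) ((hG m').bleft x hl)
      · rintro x - z ⟨l, hl⟩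
        refine ⟨0, ?_⟩
        rw [zero_zsmul, sub_zero]
        have hwZ : lam (l • a)⁻¹ (z - l • a) ∈ Z m' := (hG m').lam_mem _ hl
        have hz3 : bstar z x = bstar (l • a) (bstar (lam (l • a)⁻¹ (z - l • a)) x) +
            bstar (lam (l • a)⁻¹ (z - l • a)) x + bstar (l • a) x := by
          nth_rewrite 1 [show z = l • a + (z - l • a) from by abel]
          rw [add_bstar_decomp]
        rw [hz3]
        exact (hG m').add_mem ((hG m').add_mem
          ((hG m').bleft _ ((hG m').bright x hwZ))
          ((hG m').bright x hwZ)) ((hQ l).1 x)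
    have hchain : ∀ d : ℕ, IsIdeal (C (m' - d)) := by
      intro d
      induction d with
      | zero => simpa using htop
      | succ d ih =>
        rcases Nat.lt_or_ge d m' with hd | hd
        · have heq : m' - d = (m' - (d+1)) + 1 := by omega
          rw [heq] at ih
          exact hT _ _ (hidealIn (m' - (d+1))) ih
        · have heq : m' - (d+1) = m' - d := by omega
          rw [heq]; exact ih
    have h0 := hchain m'
    rw [Nat.sub_self] at h0
    exact h0


lemma IsSubbrace.bstar_mem {T : Set A} (hT : IsSubbrace T) {u v : A}
    (hu : u ∈ T) (hv : v ∈ T) : bstar u v ∈ T := by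
  have he : bstar u v = u * v + -u + -v := by rw [bstar]; abel
  rw [he]
  exact hT.add_mem (hT.add_mem (hT.mul_mem hu hv) (hT.neg_mem hu)) (hT.neg_mem hv)

lemma IsSubbrace.aSeq_mem {T : Set A} (hT : IsSubbrace T) {a : A} (haT : a ∈ T) (i : ℕ) :
    aSeq a i ∈ T := by
  induction i with
  | zero => exact haT
  | succ i ih => exact hT.bstar_mem ih ih

def IsSubbrace.toAddSubgroup {T : Set A} (hT : IsSubbrace T) : AddSubgroup A where
  carrier := T
  add_mem' := hT.add_mem
  zero_mem' := hT.zero_mem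
  neg_mem' := hT.neg_mem

theorem main_ideal (hTB : IsTBrace A) :
    ∀ (n : ℕ) (a : A), a ∈ zetaNat A n →
      IsIdeal ((⨆ i : Fin n, AddSubgroup.zmultiples (aSeq a i.1) : AddSubgroup A) : Set A) ∧
      braceClosure {a} =
        ((⨆ i : Fin n, AddSubgroup.zmultiples (aSeq a i.1) : AddSubgroup A) : Set A) := by
  intro n
  induction n with
  | zero =>
    intro a ha
    have ha0 : a = 0 := ha
    have hbot : (⨆ i : Fin 0, AddSubgroup.zmultiples (aSeq a i.1) : AddSubgroup A) = ⊥ :=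
      iSup_of_empty _
    rw [hbot]
    rw [show ((⊥ : AddSubgroup A) : Set A) = ({0} : Set A) from AddSubgroup.coe_bot]
    refine ⟨good_singleton_zero.isIdeal, ?_⟩
    subst ha0
    apply subset_antisymm
    · exact Set.sInter_subset_of_mem ⟨good_singleton_zero.isSubbrace, by simp⟩
    · intro x hx
      rw [Set.mem_singleton_iff] at hx; subst hx
      exact Set.mem_sInter.mpr fun T hT => hT.1.zero_mem
  | succ n ih =>
    intro a ha
    have ha₂ : bstar a a ∈ zetaNat A n := (ha a).1
    obtain ⟨hBI, _⟩ := ih (bstar a a) ha₂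
    set Bgrp : AddSubgroup A :=
      ⨆ i : Fin n, AddSubgroup.zmultiples (aSeq (bstar a a) i.1) with hBgrpdef
    have ha₂B : bstar a a ∈ Bgrp := by
      cases n with
      | zero =>
        have h0 : bstar a a = 0 := ha₂
        rw [h0]; exact Bgrp.zero_mem
      | succ n' =>
        have h0 : aSeq (bstar a a) ((⟨0, Nat.succ_pos n'⟩ : Fin (n'+1)).1) = bstar a a := rfl
        exact le_iSup (fun i : Fin (n'+1) => AddSubgroup.zmultiples (aSeq (bstar a a) i.1))
          ⟨0, Nat.succ_pos n'⟩ (h0 ▸ AddSubgroup.mem_zmultiples (bstar a a))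
    have haRel : a ∈ relZ (Bgrp : Set A) (n+1) := zetaNat_subset_relZ Bgrp.zero_mem (n+1) ha
    have hkey := key_lemma hTB hBI haRel ha₂B
    set G : AddSubgroup A := ⨆ i : Fin (n+1), AddSubgroup.zmultiples (aSeq a i.1) with hGdef
    have haG : a ∈ G :=
      le_iSup (fun i : Fin (n+1) => AddSubgroup.zmultiples (aSeq a i.1))
        ⟨0, Nat.succ_pos n⟩ (AddSubgroup.mem_zmultiples a)
    have hBle : Bgrp ≤ G := by
      apply iSup_le
      intro i
      have hsh : aSeq (bstar a a) i.1 = aSeq a (i.1+1) := aSeq_shift a i.1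
      rw [hsh]
      exact le_iSup (fun j : Fin (n+1) => AddSubgroup.zmultiples (aSeq a j.1))
        ⟨i.1+1, by omega⟩
    have hCsubG : {x : A | ∃ k : ℤ, x - k • a ∈ (Bgrp : Set A)} ⊆ (G : Set A) := by
      rintro x ⟨k, hk⟩
      have h1 : x - k • a ∈ G := hBle hk
      have h2 : k • a ∈ G := AddSubgroup.zsmul_mem _ haG k
      have h3 := G.add_mem h2 h1
      have hx : k • a + (x - k • a) = x := by abel
      rwa [hx] at h3
    have hGsubC : (G : Set A) ⊆ {x : A | ∃ k : ℤ, x - k • a ∈ (Bgrp : Set A)} := by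
      have hCG : ∀ x y : A, (∃ k : ℤ, x - k • a ∈ Bgrp) → (∃ k : ℤ, y - k • a ∈ Bgrp) →
          (∃ k : ℤ, x + y - k • a ∈ Bgrp) := by
        rintro x y ⟨k, hk⟩ ⟨l, hl⟩
        refine ⟨k + l, ?_⟩
        have he : x + y - (k + l) • a = (x - k • a) + (y - l • a) := by module
        rw [he]; exact Bgrp.add_mem hk hl
      let CG : AddSubgroup A :=
        { carrier := {x : A | ∃ k : ℤ, x - k • a ∈ (Bgrp : Set A)}
          zero_mem' := ⟨0, by simpa using Bgrp.zero_mem⟩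
          add_mem' := fun hx hy => hCG _ _ hx hy
          neg_mem' := by
            rintro x ⟨k, hk⟩
            refine ⟨-k, ?_⟩
            have he : -x - (-k) • a = -(x - k • a) := by module
            rw [he]; exact Bgrp.neg_mem hk }
      have hGle : G ≤ CG := by
        apply iSup_le
        intro i
        induction i using Fin.cases with
        | zero =>
          intro y hy
          obtain ⟨k, hk⟩ := AddSubgroup.mem_zmultiples_iff.mp hy
          refine ⟨k, ?_⟩
          have h0 : aSeq a ((0 : Fin (n+1)).1) = a := by rw [Fin.val_zero]; rfl
          rw [h0] at hk
          rw [← hk]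
          simpa using Bgrp.zero_mem
        | succ j =>
          intro y hy
          refine ⟨0, ?_⟩
          rw [zero_zsmul, sub_zero]
          have h1 : aSeq a ((j.succ : Fin (n+1)).1) = aSeq (bstar a a) j.1 := by
            rw [Fin.val_succ, ← aSeq_shift]
          rw [h1] at hy
          exact le_iSup (fun i : Fin n => AddSubgroup.zmultiples (aSeq (bstar a a) i.1)) j hy
      exact hGle
    have hCeq : {x : A | ∃ k : ℤ, x - k • a ∈ (Bgrp : Set A)} = (G : Set A) :=
      subset_antisymm hCsubG hGsubC
    have hIdeal : IsIdeal (G : Set A) := hCeq ▸ hkey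
    refine ⟨hIdeal, ?_⟩
    apply subset_antisymm
    · exact Set.sInter_subset_of_mem ⟨hIdeal.subbrace, Set.singleton_subset_iff.mpr haG⟩
    · intro x hx
      refine Set.mem_sInter.mpr ?_
      rintro T ⟨hTsub, hTa⟩
      have hle : G ≤ hTsub.toAddSubgroup := by
        apply iSup_le
        intro i y hy
        obtain ⟨k, hk⟩ := AddSubgroup.mem_zmultiples_iff.mp hy
        rw [← hk]
        exact AddSubgroup.zsmul_mem _ (hTsub.aSeq_mem (hTa rfl) i.1) k
      exact hle hx


lemma starCenter_eq_zetaNat_one : starCenter A = zetaNat A 1 := by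
  ext z
  constructor
  · intro hz x; exact ⟨(hz x).1, (hz x).2⟩
  · intro hz x; exact ⟨(hz x).1, (hz x).2⟩

lemma bstar_add_left_congr {l : ℕ} {u v : A} (hu : u ∈ zetaNat A (l+2))
    (hv : v ∈ zetaNat A (l+2)) (x : A) :
    bstar (u + v) x - bstar u x - bstar v x ∈ zetaNat A l := by
  have hG : ∀ j, Good (zetaNat A j) := fun j => good_zetaNat j
  have hd : bstar u⁻¹ v ∈ zetaNat A (l+1) := (hv u⁻¹).2
  have hd' : lam v⁻¹ (bstar u⁻¹ v) ∈ zetaNat A (l+1) := (hG (l+1)).lam_mem _ hd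
  have hw : lam u⁻¹ v = v + bstar u⁻¹ v := by rw [lam_eq_bstar_add]; abel
  have h1 : bstar (lam u⁻¹ v) x - bstar v x ∈ zetaNat A l := by
    rw [hw, add_bstar_decomp]
    have t1 : bstar (lam v⁻¹ (bstar u⁻¹ v)) x ∈ zetaNat A l := (hd' x).1
    have t2 : bstar v (bstar (lam v⁻¹ (bstar u⁻¹ v)) x) ∈ zetaNat A l := (hG l).bleft v t1
    have he : bstar v (bstar (lam v⁻¹ (bstar u⁻¹ v)) x) + bstar (lam v⁻¹ (bstar u⁻¹ v)) x
        + bstar v x - bstar v x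
        = bstar v (bstar (lam v⁻¹ (bstar u⁻¹ v)) x) + bstar (lam v⁻¹ (bstar u⁻¹ v)) x := by
      abel
    rw [he]
    exact (hG l).add_mem t2 t1
  have h2 : bstar u (bstar (lam u⁻¹ v) x) ∈ zetaNat A l := by
    have hvx : bstar v x ∈ zetaNat A (l+1) := (hv x).1
    have e : bstar (lam u⁻¹ v) x = (bstar (lam u⁻¹ v) x - bstar v x) + bstar v x := by abel
    rw [e, bstar_add_right]
    exact (hG l).add_mem ((hG l).bleft u h1) ((hvx u).2)
  rw [add_bstar_decomp]
  have he : bstar u (bstar (lam u⁻¹ v) x) + bstar (lam u⁻¹ v) x + bstar u x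
      - bstar u x - bstar v x
      = bstar u (bstar (lam u⁻¹ v) x) + (bstar (lam u⁻¹ v) x - bstar v x) := by abel
  rw [he]
  exact (hG l).add_mem h2 h1

lemma bstar_neg_left_congr {l : ℕ} {u : A} (hu : u ∈ zetaNat A (l+2)) (x : A) :
    bstar (-u) x + bstar u x ∈ zetaNat A l := by
  have h := bstar_add_left_congr hu ((good_zetaNat (l+2)).neg_mem hu) x
  rw [add_neg_cancel, bstar_zero_left] at h
  have he : bstar (-u) x + bstar u x = -(0 - bstar u x - bstar (-u) x) := by abel
  rw [he]; exact (good_zetaNat l).neg_mem h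

lemma bstar_zsmul_left_congr {l : ℕ} {u : A} (hu : u ∈ zetaNat A (l+2)) (k : ℤ) (x : A) :
    bstar (k • u) x - k • bstar u x ∈ zetaNat A l := by
  induction k using Int.induction_on with
  | zero =>
    rw [zero_zsmul, zero_zsmul, bstar_zero_left, sub_zero]
    exact (good_zetaNat l).zero_mem
  | succ i ih =>
    have hku : (i:ℤ) • u ∈ zetaNat A (l+2) := (good_zetaNat (l+2)).zsmul_mem hu _
    have h1 := bstar_add_left_congr hku hu x
    have he2 : ((i:ℤ)+1) • u = (i:ℤ) • u + u := by module
    have he : bstar ((i:ℤ) • u + u) x - ((i:ℤ)+1) • bstar u x =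
        (bstar ((i:ℤ) • u + u) x - bstar ((i:ℤ) • u) x - bstar u x)
        + (bstar ((i:ℤ) • u) x - (i:ℤ) • bstar u x) := by module
    rw [he2, he]
    exact (good_zetaNat l).add_mem h1 ih
  | pred i ih =>
    have hku : (-(i:ℤ)) • u ∈ zetaNat A (l+2) := (good_zetaNat (l+2)).zsmul_mem hu _
    have hnu : -u ∈ zetaNat A (l+2) := (good_zetaNat (l+2)).neg_mem hu
    have h1 := bstar_add_left_congr hku hnu x
    have h2 := bstar_neg_left_congr hu x
    have he2 : (-(i:ℤ)-1) • u = (-(i:ℤ)) • u + -u := by module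
    have he : bstar ((-(i:ℤ)) • u + -u) x - (-(i:ℤ)-1) • bstar u x =
        (bstar ((-(i:ℤ)) • u + -u) x - bstar ((-(i:ℤ)) • u) x - bstar (-u) x)
        + (bstar ((-(i:ℤ)) • u) x - (-(i:ℤ)) • bstar u x)
        + (bstar (-u) x + bstar u x) := by module
    rw [he2, he]
    exact (good_zetaNat l).add_mem ((good_zetaNat l).add_mem h1 ih) h2

section TorsionFree

variable (htf : ∀ z ∈ starCenter A, z ≠ 0 → ¬ IsOfFinAddOrder z)
include htf

lemma tf_eq_zero {z : A} (hz : z ∈ zetaNat A 1) {k : ℤ} (hk : k ≠ 0) (h : k • z = 0) :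
    z = 0 := by
  by_contra hne
  apply htf z (by rw [starCenter_eq_zetaNat_one]; exact hz) hne
  refine isOfFinAddOrder_iff_nsmul_eq_zero.mpr ⟨k.natAbs, Int.natAbs_pos.mpr hk, ?_⟩
  have h2 : (k.natAbs : ℤ) • z = 0 := by
    rcases Int.natAbs_eq k with h' | h'
    · rw [← h']; exact h
    · rw [← neg_neg ((k.natAbs : ℤ)), ← h', neg_zsmul, h, neg_zero]
  rwa [natCast_zsmul] at h2

lemma malcev : ∀ (l : ℕ) {z : A}, z ∈ zetaNat A (l+1) → ∀ {k : ℤ}, k ≠ 0 →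
    k • z ∈ zetaNat A l → z ∈ zetaNat A l := by
  intro l
  induction l with
  | zero =>
    intro z hz k hk h
    have h0 : k • z = 0 := h
    have := tf_eq_zero htf hz hk h0
    exact this
  | succ l ihl =>
    intro z hz k hk h
    intro x
    constructor
    · have hv : bstar z x ∈ zetaNat A (l+1) := (hz x).1
      have h1 : bstar (k • z) x ∈ zetaNat A l := (h x).1
      have h2 : bstar (k • z) x - k • bstar z x ∈ zetaNat A l :=
        bstar_zsmul_left_congr hz k x
      have h3 : k • bstar z x ∈ zetaNat A l := by
        have he : k • bstar z x = bstar (k • z) x - (bstar (k • z) x - k • bstar z x) := by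
          abel
        rw [he]; exact (good_zetaNat l).sub_mem h1 h2
      exact ihl hv hk h3
    · have hv : bstar x z ∈ zetaNat A (l+1) := (hz x).2
      have h1 : bstar x (k • z) ∈ zetaNat A l := (h x).2
      have h3 : k • bstar x z ∈ zetaNat A l := by rw [← bstar_zsmul_right]; exact h1
      exact ihl hv hk h3

lemma indep_rel : ∀ (n : ℕ) (a : A), a ∈ zetaNat A n → ∀ c : Fin n → ℤ,
    (∑ i : Fin n, c i • aSeq a i.1) = 0 → ∀ i : Fin n, c i • aSeq a i.1 = 0 := by
  intro n
  induction n with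
  | zero => intro a _ c _ i; exact i.elim0
  | succ n ihn =>
    intro a ha c hsum i
    have ha₂ : bstar a a ∈ zetaNat A n := (ha a).1
    have hshift : ∀ j : Fin n, aSeq a ((j.succ : Fin (n+1)).1) = aSeq (bstar a a) j.1 := by
      intro j; rw [Fin.val_succ, ← aSeq_shift]
    have h00 : aSeq a ((0 : Fin (n+1)).1) = a := by rw [Fin.val_zero]; rfl
    have hsplit : c 0 • a + ∑ j : Fin n, c j.succ • aSeq (bstar a a) j.1 = 0 := by
      rw [← hsum, Fin.sum_univ_succ, h00]
      congr 1
      exact Finset.sum_congr rfl fun j _ => by rw [hshift j]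
    by_cases hc0 : c 0 • a = 0
    · have hrest : ∑ j : Fin n, c j.succ • aSeq (bstar a a) j.1 = 0 := by
        rw [hc0, zero_add] at hsplit; exact hsplit
      have hres := ihn (bstar a a) ha₂ (fun j => c j.succ) hrest
      induction i using Fin.cases with
      | zero => rw [h00]; exact hc0
      | succ j => rw [hshift j]; exact hres j
    · have hc0' : c 0 ≠ 0 := fun h' => hc0 (by rw [h', zero_zsmul])
      have hmem : (∑ j : Fin n, c j.succ • aSeq (bstar a a) j.1) ∈ zetaNat A n := by
        let ZG : AddSubgroup A := (good_zetaNat (A := A) n).isSubbrace.toAddSubgroup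
        have : (∑ j : Fin n, c j.succ • aSeq (bstar a a) j.1) ∈ ZG := by
          refine AddSubgroup.sum_mem ZG fun j _ => ZG.zsmul_mem ?_ _
          exact zetaNat_mono (Nat.sub_le n j.1) (aSeq_mem_zeta ha₂ j.1)
        exact this
      have hca : c 0 • a ∈ zetaNat A n := by
        have he : c 0 • a = -(∑ j : Fin n, c j.succ • aSeq (bstar a a) j.1) := by
          rw [eq_neg_iff_add_eq_zero]; exact hsplit
        rw [he]; exact (good_zetaNat n).neg_mem hmem
      have haN : a ∈ zetaNat A n := malcev htf n ha hc0' hca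
      have haz : aSeq a n = 0 := aSeq_self_eq_zero haN
      have hsum2 : (∑ j : Fin n, c j.castSucc • aSeq a j.1) = 0 := by
        rw [Fin.sum_univ_castSucc] at hsum
        rw [Fin.val_last, haz, smul_zero, add_zero] at hsum
        rw [← hsum]
        exact Finset.sum_congr rfl fun j _ => by rw [Fin.coe_castSucc]
      have hres := ihn a haN (fun j => c j.castSucc) hsum2
      induction i using Fin.lastCases with
      | last => rw [Fin.val_last, haz, smul_zero]
      | cast j =>
        have := hres j
        rwa [Fin.coe_castSucc] at *
        
lemma indep (n : ℕ) (a : A) (ha : a ∈ zetaNat A n) :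
    iSupIndep (fun i : Fin n => AddSubgroup.zmultiples (aSeq a i.1)) := by
  intro i
  rw [AddSubgroup.disjoint_def]
  intro x hxi hxrest
  obtain ⟨k, hk⟩ := AddSubgroup.mem_zmultiples_iff.mp hxi
  let H : AddSubgroup A :=
    { carrier := {y : A | ∃ c : Fin n → ℤ, c i = 0 ∧ y = ∑ j : Fin n, c j • aSeq a j.1}
      zero_mem' := ⟨0, rfl, by simp⟩
      add_mem' := by
        rintro y z ⟨c, hc, rfl⟩ ⟨d, hd, rfl⟩
        refine ⟨c + d, by simp [hc, hd], ?_⟩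
        rw [← Finset.sum_add_distrib]
        exact Finset.sum_congr rfl fun j _ => by simp [add_zsmul]
      neg_mem' := by
        rintro y ⟨c, hc, rfl⟩
        refine ⟨-c, by simp [hc], ?_⟩
        rw [← Finset.sum_neg_distrib]
        exact Finset.sum_congr rfl fun j _ => by simp [neg_zsmul] }
  have hle : (⨆ j, ⨆ (_ : j ≠ i), AddSubgroup.zmultiples (aSeq a j.1)) ≤ H := by
    refine iSup_le fun j => iSup_le fun hj => ?_
    intro y hy
    obtain ⟨l, hl⟩ := AddSubgroup.mem_zmultiples_iff.mp hy
    refine ⟨Pi.single j l, by rw [Pi.single_eq_of_ne (Ne.symm hj)], ?_⟩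
    rw [← hl]
    rw [Finset.sum_eq_single j]
    · rw [Pi.single_eq_same]
    · intro b _ hb; rw [Pi.single_eq_of_ne hb, zero_zsmul]
    · intro hja; exact absurd (Finset.mem_univ j) hja
  obtain ⟨c, hci, hcx⟩ := hle hxrest
  have hrel : (∑ j : Fin n,
      (fun j => (Pi.single i k : Fin n → ℤ) j - c j) j • aSeq a j.1) = 0 := by
    have hsplit : ∑ j : Fin n, ((Pi.single i k : Fin n → ℤ) j - c j) • aSeq a j.1
        = (∑ j : Fin n, (Pi.single i k : Fin n → ℤ) j • aSeq a j.1)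
          - ∑ j : Fin n, c j • aSeq a j.1 := by
      rw [← Finset.sum_sub_distrib]
      exact Finset.sum_congr rfl fun j _ => by rw [sub_zsmul]; abel
    show ∑ j : Fin n, ((Pi.single i k : Fin n → ℤ) j - c j) • aSeq a j.1 = 0
    rw [hsplit, ← hcx, Finset.sum_eq_single i]
    · rw [Pi.single_eq_same, hk, sub_self]
    · intro b _ hb; rw [Pi.single_eq_of_ne hb, zero_zsmul]
    · intro h; exact absurd (Finset.mem_univ i) h
  have hres := indep_rel htf n a ha _ hrel i
  simp only [Pi.single_eq_same, hci, sub_zero] at hres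
  rw [← hk]; exact hres

end TorsionFree


end LeftBrace


open LeftBrace in
/-- **Lemma (extra2).** Let `A` be a T-brace and `a ∈ ζ_n(⋆,A)`; set `a₁ = a`,
`a_{i+1} = a_i ⋆ a_i`.  Then (i) `br(a)` is an ideal of `A` and
`br(a) = ⟨a₁⟩ + ⟨a₂⟩ + ⋯ + ⟨a_n⟩`; (ii) if the additive group of `ζ(⋆,A)` is
torsion-free, then this sum is direct: `br(a) = ⟨a₁⟩ ⊕ ⟨a₂⟩ ⊕ ⋯ ⊕ ⟨a_n⟩`. -/
theorem braceClosure_eq_sum_zmultiples_aSeq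
    {A : Type u} [LeftBrace A] (hT : IsTBrace A) (n : ℕ) (a : A)
    (ha : a ∈ zetaNat A n) :
    (IsIdeal (braceClosure {a}) ∧
      braceClosure {a} =
        ((⨆ i : Fin n, AddSubgroup.zmultiples (aSeq a i.1) : AddSubgroup A) : Set A)) ∧
    ((∀ z ∈ starCenter A, z ≠ 0 → ¬ IsOfFinAddOrder z) →
      iSupIndep (fun i : Fin n => AddSubgroup.zmultiples (aSeq a i.1))) := by
  refine ⟨?_, ?_⟩
  · obtain ⟨h1, h2⟩ := main_ideal hT n a ha
    exact ⟨by rw [h2]; exact h1, h2⟩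
  · intro htf
    exact indep htf n a ha
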